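/- Given n refueling stations along a fixed route at positions 0 ≤ x_1 < ... < x_n ≤ D with prices p_i, an initial fuel f_0, capacity τ, consumption rate φ, and the full-tank policy, the greedy choice of always refueling at the cheapest reachable station before running out of fuel produces a fuel-feasible plan whenever some fuel-feasible plan exists (i.e., consecutive reachable gaps never exceed τ/φ and x_1 ≤ f_0/φ when φD > f_0). -/

import Mathlib

/-- Greedy refueling is well-defined whenever some feasible plan
exists.  Along a route of length D with stations at positions x 0 < ... <
x (n-1), prices p, initial fuel f₀ ≤ τ and consumption rate φ, if x 0 ≤ f₀/φ
(when φ·D > f₀) and no consecutive gap (including the final leg) exceeds τ/φ,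
then there exists a fuel-feasible plan (a strictly increasing selection of
stations, full tank at each stop) which is greedy: each chosen stop is a
cheapest station among those reachable from the previous stop. -/
theorem aux18 (n : ℕ) (D τ φ : ℝ) (x p : Fin n → ℝ) (hx : StrictMono x)
    (hgap : ∀ i : Fin n, ∀ h : i.1 + 1 < n, φ * (x ⟨i.1 + 1, h⟩ - x i) ≤ τ)
    (hlast : ∀ hn : 0 < n, φ * (D - x ⟨n - 1, Nat.sub_lt hn Nat.one_pos⟩) ≤ τ) :
    ∀ m : ℕ, ∀ cur : Fin n, n - cur.1 ≤ m →
    ∃ (k : ℕ) (idx : Fin k → Fin n), StrictMono idx ∧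
      (k = 0 → φ * (D - x cur) ≤ τ) ∧
      (∀ h : 0 < k, cur < idx ⟨0, h⟩ ∧ φ * (x (idx ⟨0, h⟩) - x cur) ≤ τ ∧
        ∀ i, cur < i → φ * (x i - x cur) ≤ τ → p (idx ⟨0, h⟩) ≤ p i) ∧
      (∀ j : Fin k, ∀ h : j.1 + 1 < k,
        φ * (x (idx ⟨j.1 + 1, h⟩) - x (idx j)) ≤ τ ∧
        ∀ i, idx j < i → φ * (x i - x (idx j)) ≤ τ → p (idx ⟨j.1 + 1, h⟩) ≤ p i) ∧
      (∀ h : 0 < k, φ * (D - x (idx ⟨k - 1, Nat.sub_lt h Nat.one_pos⟩)) ≤ τ) := by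
  intro m
  induction m with
  | zero => intro cur hc; exact absurd hc (by have := cur.2; omega)
  | succ m ih =>
    intro cur hc
    by_cases hdone : φ * (D - x cur) ≤ τ
    · exact ⟨0, Fin.elim0, fun a => a.elim0, fun _ => hdone,
        fun h => absurd h (by omega), fun j => j.elim0, fun h => absurd h (by omega)⟩
    · have hn : 0 < n := by have := cur.2; omega
      have hcur : cur.1 + 1 < n := by
        by_contra hh
        have hc1 : cur = ⟨n - 1, by omega⟩ := Fin.ext (show cur.1 = n - 1 by have := cur.2; omega)
        exact hdone (by rw [hc1]; exact hlast hn)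
      set S : Finset (Fin n) :=
        Finset.univ.filter (fun i => cur < i ∧ φ * (x i - x cur) ≤ τ) with hS
      have hSne : S.Nonempty := by
        refine ⟨⟨cur.1 + 1, hcur⟩, ?_⟩
        simp only [hS, Finset.mem_filter, Finset.mem_univ, true_and]
        exact ⟨by simp [Fin.lt_def], hgap cur hcur⟩
      obtain ⟨m', hm'S, hmin⟩ := S.exists_min_image p hSne
      simp only [hS, Finset.mem_filter, Finset.mem_univ, true_and] at hm'S
      obtain ⟨hcm', hfm'⟩ := hm'S
      obtain ⟨k, idx, hmono, hk0, hfirst, hpair, hend⟩ :=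
        ih m' (by have := Fin.lt_def.mp hcm'; omega)
      refine ⟨k + 1, fun j => if h0 : j.1 = 0 then m' else idx ⟨j.1 - 1, by omega⟩,
        ?_, ?_, ?_, ?_, ?_⟩
      · intro a b hab
        rcases a with ⟨a, ha⟩; rcases b with ⟨b, hb⟩
        have hab' : a < b := hab
        rcases b with _ | b
        · omega
        · rcases a with _ | a
          · simp only [dif_pos rfl, dif_neg (Nat.succ_ne_zero b)]
            calc m' < idx ⟨0, by omega⟩ := (hfirst (by omega)).1
              _ ≤ idx ⟨b + 1 - 1, by omega⟩ := hmono.monotone (by simp [Fin.le_def])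
          · simp only [dif_neg (Nat.succ_ne_zero a), dif_neg (Nat.succ_ne_zero b)]
            exact hmono (by simp [Fin.lt_def]; omega)
      · omega
      · intro h
        simp only [dif_pos rfl]
        exact ⟨hcm', hfm', fun i hi hf => hmin i (by
          simp only [hS, Finset.mem_filter, Finset.mem_univ, true_and]; exact ⟨hi, hf⟩)⟩
      · rintro ⟨j, hj⟩ h
        have h' : j + 1 < k + 1 := h
        simp only
        rcases j with _ | j
        · simp only [dif_pos rfl, dif_neg (Nat.succ_ne_zero 0)]
          exact ⟨(hfirst (by omega)).2.1, (hfirst (by omega)).2.2⟩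
        · simp only [dif_neg (Nat.succ_ne_zero (j + 1)), dif_neg (Nat.succ_ne_zero j)]
          exact hpair ⟨j, by omega⟩ (show j + 1 < k by omega)
      · intro h
        rcases k with _ | k
        · simp only [Nat.add_sub_cancel, dif_pos rfl]
          exact hk0 rfl
        · simp only [Nat.add_sub_cancel, dif_neg (Nat.succ_ne_zero k)]
          exact hend (by omega)

theorem stmt_18 (n : ℕ) (hn : 0 < n) (D τ f0 φ : ℝ)
    (hφ : 0 < φ) (hτ : 0 < τ) (hf0 : 0 ≤ f0) (hf0τ : f0 ≤ τ)
    (x p : Fin n → ℝ) (hx : StrictMono x)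
    (hxD : ∀ i, 0 ≤ x i ∧ x i ≤ D)
    (hfirst : f0 < φ * D → φ * x ⟨0, hn⟩ ≤ f0)
    (hgap : ∀ i : Fin n, ∀ h : i.1 + 1 < n, φ * (x ⟨i.1 + 1, h⟩ - x i) ≤ τ)
    (hlast : φ * (D - x ⟨n - 1, by omega⟩) ≤ τ) :
    ∃ (k : ℕ) (idx : Fin k → Fin n), StrictMono idx ∧
      -- fuel-feasibility of the plan
      ((k = 0 → φ * D ≤ f0) ∧
       (∀ h : 0 < k, φ * x (idx ⟨0, h⟩) ≤ f0) ∧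
       (∀ j : Fin k, ∀ h : j.1 + 1 < k,
          φ * (x (idx ⟨j.1 + 1, h⟩) - x (idx j)) ≤ τ) ∧
       (∀ h : 0 < k, φ * (D - x (idx ⟨k - 1, by omega⟩)) ≤ τ)) ∧
      -- greediness: each stop is a cheapest reachable station
      ((∀ h : 0 < k, ∀ i : Fin n, φ * x i ≤ f0 → p (idx ⟨0, h⟩) ≤ p i) ∧
       (∀ j : Fin k, ∀ h : j.1 + 1 < k, ∀ i : Fin n,
          idx j < i → φ * (x i - x (idx j)) ≤ τ →
          p (idx ⟨j.1 + 1, h⟩) ≤ p i)) := by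
  by_cases hD : φ * D ≤ f0
  · exact ⟨0, Fin.elim0, fun a => a.elim0,
      ⟨fun _ => hD, fun h => absurd h (by omega), fun j => j.elim0,
       fun h => absurd h (by omega)⟩,
      fun h => absurd h (by omega), fun j => j.elim0⟩
  · push_neg at hD
    set S : Finset (Fin n) := Finset.univ.filter (fun i => φ * x i ≤ f0) with hS
    have hSne : S.Nonempty := by
      refine ⟨⟨0, hn⟩, ?_⟩
      simp only [hS, Finset.mem_filter, Finset.mem_univ, true_and]
      exact hfirst hD
    obtain ⟨m0, hm0S, hmin⟩ := S.exists_min_image p hSne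
    simp only [hS, Finset.mem_filter, Finset.mem_univ, true_and] at hm0S
    obtain ⟨k, idx, hmono, hk0, hfst, hpair, hend⟩ :=
      aux18 n D τ φ x p hx hgap (fun _ => hlast) n m0 (by omega)
    refine ⟨k + 1, fun j => if h0 : j.1 = 0 then m0 else idx ⟨j.1 - 1, by omega⟩,
      ?_, ⟨?_, ?_, ?_, ?_⟩, ?_, ?_⟩
    · intro a b hab
      rcases a with ⟨a, ha⟩; rcases b with ⟨b, hb⟩
      have hab' : a < b := hab
      rcases b with _ | b
      · omega
      · rcases a with _ | a
        · simp only [dif_pos rfl, dif_neg (Nat.succ_ne_zero b)]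
          calc m0 < idx ⟨0, by omega⟩ := (hfst (by omega)).1
            _ ≤ idx ⟨b + 1 - 1, by omega⟩ := hmono.monotone (by simp [Fin.le_def])
        · simp only [dif_neg (Nat.succ_ne_zero a), dif_neg (Nat.succ_ne_zero b)]
          exact hmono (by simp [Fin.lt_def]; omega)
    · omega
    · intro h
      simp only [dif_pos rfl]
      exact hm0S
    · rintro ⟨j, hj⟩ h
      have h' : j + 1 < k + 1 := h
      simp only
      rcases j with _ | j
      · simp only [dif_pos rfl, dif_neg (Nat.succ_ne_zero 0)]
        exact (hfst (by omega)).2.1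
      · simp only [dif_neg (Nat.succ_ne_zero (j + 1)), dif_neg (Nat.succ_ne_zero j)]
        exact (hpair ⟨j, by omega⟩ (show j + 1 < k by omega)).1
    · intro h
      rcases k with _ | k
      · simp only [Nat.add_sub_cancel, dif_pos rfl]
        exact hk0 rfl
      · simp only [Nat.add_sub_cancel, dif_neg (Nat.succ_ne_zero k)]
        exact hend (by omega)
    · intro h i hi
      simp only [dif_pos rfl]
      exact hmin i (by simp only [hS, Finset.mem_filter, Finset.mem_univ, true_and]; exact hi)
    · rintro ⟨j, hj⟩ h
      have h' : j + 1 < k + 1 := h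
      simp only
      rcases j with _ | j
      · simp only [dif_pos rfl, dif_neg (Nat.succ_ne_zero 0)]
        exact (hfst (by omega)).2.2
      · simp only [dif_neg (Nat.succ_ne_zero (j + 1)), dif_neg (Nat.succ_ne_zero j)]
        exact (hpair ⟨j, by omega⟩ (show j + 1 < k by omega)).2
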